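/- Let 0 ≤ λ < α, let g: ℝ → (λ, α) be continuous, and let U ⊆ ℝ be open. If the lower right Dini derivative D₊g(x) lies in the interval [λ − g(x), α − g(x)] for all x ∈ U, then the upper right Dini derivative D⁺g(x) also lies in [λ − g(x), α − g(x)] for all x ∈ U. -/

import Mathlib

open Filter Topology

/-- Upper right Dini derivative as an `EReal`. -/
noncomputable def upperDini (f : ℝ → ℝ) (x : ℝ) : EReal :=
  limsup (fun ε : ℝ => (((f (x + ε) - f x) / ε : ℝ) : EReal)) (nhdsWithin 0 (Set.Ioi 0))

/-- Lower right Dini derivative as an `EReal`. -/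
noncomputable def lowerDini (f : ℝ → ℝ) (x : ℝ) : EReal :=
  liminf (fun ε : ℝ => (((f (x + ε) - f x) / ε : ℝ) : EReal)) (nhdsWithin 0 (Set.Ioi 0))

/-- Fencing lemma: if the lower right Dini derivative of `g` is at most `alp - g x` on
`[a,b)`, then `g` stays below the solution of `B' = c - B`, `B a = g a`, for any `c > alp`. -/
lemma aux_fence {g : ℝ → ℝ} {alp a b c : ℝ} (hg : Continuous g)
    (hd : ∀ x ∈ Set.Ico a b, ∀ r, alp - g x < r → ∃ᶠ z in 𝓝[>] x, slope g x z < r)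
    (hc : alp < c) :
    ∀ x ∈ Set.Icc a b, g x ≤ c - (c - g a) * Real.exp (a - x) := by
  have hB : ∀ x : ℝ, HasDerivAt (fun t => c - (c - g a) * Real.exp (a - t))
      ((c - g a) * Real.exp (a - x)) x := by
    intro x
    have h1 : HasDerivAt (fun t : ℝ => a - t) (-1) x := (hasDerivAt_id x).const_sub a
    have h2 : HasDerivAt (fun t : ℝ => Real.exp (a - t)) (Real.exp (a - x) * (-1)) x :=
      (Real.hasDerivAt_exp (a - x)).comp x h1
    have h3 := (h2.const_mul (c - g a)).const_sub c
    refine h3.congr_deriv ?_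
    ring
  intro x hx
  refine image_le_of_liminf_slope_right_lt_deriv_boundary (f' := fun y => alp - g y)
    hg.continuousOn hd ?_ hB ?_ hx
  · simp
  · intro y hy hgy
    rw [hgy]
    nlinarith [Real.exp_pos (a - y)]

/-- If `0 ≤ λ < α`, `g : ℝ → (λ,α)` is continuous, `U` open, and the lower right Dini
derivative of `g` lies in `[λ − g(x), α − g(x)]` on `U`, then so does the upper right one. -/
theorem stmt2 (lam alp : ℝ) (hlam : 0 ≤ lam) (hla : lam < alp)
    (g : ℝ → ℝ) (hg : Continuous g) (hrange : ∀ x, g x ∈ Set.Ioo lam alp)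
    (U : Set ℝ) (hU : IsOpen U)
    (h : ∀ x ∈ U, lowerDini g x ∈
      Set.Icc ((lam - g x : ℝ) : EReal) ((alp - g x : ℝ) : EReal)) :
    ∀ x ∈ U, upperDini g x ∈
      Set.Icc ((lam - g x : ℝ) : EReal) ((alp - g x : ℝ) : EReal) := by
  have hfreq : ∀ y ∈ U, ∀ r : ℝ, alp - g y < r → ∃ᶠ z in 𝓝[>] y, slope g y z < r := by
    intro y hy r hr
    have h1 : lowerDini g y < (r : EReal) :=
      lt_of_le_of_lt (h y hy).2 (by exact_mod_cast hr)
    have h2 : ∃ᶠ ε in 𝓝[>] (0:ℝ), (((g (y + ε) - g y) / ε : ℝ) : EReal) < (r : EReal) :=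
      frequently_lt_of_liminf_lt (by isBoundedDefault) h1
    have h3 : ∃ᶠ ε in 𝓝[>] (0:ℝ), slope g y (y + ε) < r := by
      refine h2.mono fun ε hε => ?_
      rw [slope_def_field]
      have : (g (y + ε) - g y) / ε < r := EReal.coe_lt_coe_iff.mp hε
      simpa using this
    have hmap : Tendsto (fun ε : ℝ => y + ε) (𝓝[>] (0:ℝ)) (𝓝[>] y) := by
      apply tendsto_nhdsWithin_of_tendsto_nhds_of_eventually_within
      · have := ((continuous_add_left y).tendsto 0).mono_left (nhdsWithin_le_nhds
          (s := Set.Ioi (0:ℝ)))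
        simpa using this
      · filter_upwards [eventually_mem_nhdsWithin] with ε (hε : ε ∈ Set.Ioi (0:ℝ))
        simpa using hε
    exact (frequently_map.mpr h3).filter_mono hmap
  intro x hx
  constructor
  · exact le_trans (h x hx).1 (liminf_le_limsup)
  · have key : ∀ η : ℝ, 0 < η → upperDini g x ≤ ((alp - g x + η : ℝ) : EReal) := by
      intro η hη
      set c := alp + η with hcdef
      have hc : alp < c := by simp [hcdef, hη]
      obtain ⟨ε₀, hε₀, hball⟩ := Metric.isOpen_iff.mp hU x hx
      set δ := ε₀ / 2 with hδdef
      have hδ : 0 < δ := by positivity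
      have hsub : Set.Ico x (x + δ) ⊆ U := by
        intro z hz
        apply hball
        rw [Metric.mem_ball, Real.dist_eq, abs_lt]
        constructor <;> [linarith [hz.1]; linarith [hz.2, hε₀]]
      have haux := aux_fence (a := x) (b := x + δ) hg
        (fun z hz => hfreq z (hsub hz)) hc
      have hev : ∀ᶠ ε in 𝓝[>] (0:ℝ),
          (((g (x + ε) - g x) / ε : ℝ) : EReal) ≤ ((alp - g x + η : ℝ) : EReal) := by
        filter_upwards [Ioc_mem_nhdsGT hδ] with ε hε
        have hz := haux (x + ε) ⟨by linarith [hε.1], by linarith [hε.2]⟩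
        rw [EReal.coe_le_coe_iff]
        have hgx : g x < c := (hrange x).2.trans hc
        have hexp : (x - (x + ε)) + 1 ≤ Real.exp (x - (x + ε)) := Real.add_one_le_exp _
        rw [div_le_iff₀ hε.1]
        nlinarith [hε.1]
      exact limsup_le_of_le (by isBoundedDefault) hev
    have htend : Tendsto (fun η : ℝ => ((alp - g x + η : ℝ) : EReal)) (𝓝[>] (0:ℝ))
        (𝓝 ((alp - g x : ℝ) : EReal)) := by
      have h1 : Tendsto (fun η : ℝ => alp - g x + η) (𝓝[>] (0:ℝ)) (𝓝 (alp - g x)) := by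
        have := ((continuous_add_left (alp - g x)).tendsto 0).mono_left (nhdsWithin_le_nhds
          (s := Set.Ioi (0:ℝ)))
        simpa using this
      exact (continuous_coe_real_ereal.tendsto _).comp h1
    refine ge_of_tendsto htend ?_
    filter_upwards [eventually_mem_nhdsWithin] with η (hη : η ∈ Set.Ioi (0:ℝ))
    exact key η hη
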